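/- Every maximal abelian subgroup of diagonalizable elements of G = SL₂(F)² ⋊ ⟨δ⟩ that is contained in N² = (T∪Tσ)² and meets T²·(σ,σ) nontrivially is conjugate in G to a proper subgroup of T², contradicting maximality; more precisely, if an abelian subgroup A of N² contains an element (t₁σ, t₂σ), then every element of A lies in {(±t₁σ, ±t₂σ), (±1, ±t₂σ), (±t₁σ, ±1), (±1, ±1)}. -/

import Mathlib

open Matrix

/-- The matrix σ = [[0,1],[-1,0]] as an element of SL₂(F). -/
def sigmaSL (F : Type*) [Field F] : Matrix.SpecialLinearGroup (Fin 2) F :=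
  ⟨!![0, 1; -1, 0], by simp [Matrix.det_fin_two_of]⟩

/-- The diagonal matrix diag(λ, λ⁻¹) as an element of SL₂(F). -/
def torusSL (F : Type*) [Field F] (l : Fˣ) : Matrix.SpecialLinearGroup (Fin 2) F :=
  ⟨!![(l : F), 0; 0, ((l⁻¹ : Fˣ) : F)], by simp [Matrix.det_fin_two_of]⟩

/-- The diagonal torus T of SL₂(F), as a set. -/
def torusSet (F : Type*) [Field F] : Set (Matrix.SpecialLinearGroup (Fin 2) F) :=
  {g | ∃ l : Fˣ, g = torusSL F l}

/-- The set N = T ∪ Tσ, the normalizer of the diagonal torus in SL₂(F). -/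
def normSet (F : Type*) [Field F] : Set (Matrix.SpecialLinearGroup (Fin 2) F) :=
  torusSet F ∪ ((fun t => t * sigmaSL F) '' torusSet F)

instance : Fact (Even (Fintype.card (Fin 2))) := ⟨by simp⟩


section Helpers
variable {F : Type*} [Field F]


lemma torus_one : torusSL F 1 = 1 := by
  apply Subtype.ext
  show !![((1:Fˣ):F), 0; 0, (((1:Fˣ)⁻¹:Fˣ):F)] = (1 : Matrix (Fin 2) (Fin 2) F)
  simp [Matrix.one_fin_two]

lemma torus_neg (l : Fˣ) : torusSL F (-l) = -torusSL F l := by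
  apply Subtype.ext
  show !![((-l:Fˣ):F), 0; 0, (((-l)⁻¹:Fˣ):F)] = -(!![(l:F), 0; 0, ((l⁻¹:Fˣ):F)])
  simp

lemma torus_inj {a b : Fˣ} (h : torusSL F a = torusSL F b) : a = b := by
  have := congrFun (congrFun (congrArg Subtype.val h) 0) 0
  simp [torusSL] at this
  exact Units.ext this

lemma comm_in_norm {l : Fˣ} {x : Matrix.SpecialLinearGroup (Fin 2) F} (hx : x ∈ normSet F)
    (hc : x * (torusSL F l * sigmaSL F) = (torusSL F l * sigmaSL F) * x) :
    x = torusSL F l * sigmaSL F ∨ x = -(torusSL F l * sigmaSL F) ∨ x = 1 ∨ x = -1 := by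
  have hl : (l:F) ≠ 0 := l.ne_zero
  rcases hx with ⟨m, rfl⟩ | ⟨t, ⟨m, rfl⟩, rfl⟩
  · have hm : (m:F) ≠ 0 := m.ne_zero
    have hmat := congrArg Subtype.val hc
    have h01 := congrFun (congrFun hmat 0) 1
    simp only [Matrix.SpecialLinearGroup.coe_mul] at h01
    simp [Matrix.SpecialLinearGroup.coe_mul, torusSL, sigmaSL, Matrix.mul_apply,
      Fin.sum_univ_two] at h01
    have hm2 : (m:F) * m = 1 := by
      field_simp at h01
      have h2 : (m:F) * m * l = 1 * l := by linear_combination (l:F) * h01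
      exact mul_right_cancel₀ hl h2
    rcases mul_self_eq_one_iff.mp hm2 with h1 | h1
    · right; right; left
      rw [Units.val_eq_one.mp h1, torus_one]
    · right; right; right
      have : m = -1 := Units.ext (show (m:F) = ((-1:Fˣ):F) by simp [h1])
      rw [this, torus_neg, torus_one]
  · simp only
    have hm : (m:F) ≠ 0 := m.ne_zero
    have hmat := congrArg Subtype.val hc
    have h00 := congrFun (congrFun hmat 0) 0
    simp only [Matrix.SpecialLinearGroup.coe_mul] at h00
    simp [Matrix.SpecialLinearGroup.coe_mul, torusSL, sigmaSL, Matrix.mul_apply,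
      Fin.sum_univ_two] at h00
    have hm2 : (m:F) * m = (l:F) * l := by field_simp at h00; linear_combination h00
    rcases mul_self_eq_mul_self_iff.mp hm2 with h1 | h1
    · left; rw [Units.ext h1]
    · right; left
      have : m = -l := Units.ext (show (m:F) = ((-l:Fˣ):F) by simp [h1])
      rw [this, torus_neg, neg_mul]


lemma fin2_ext {a b c d a' b' c' d' : F} (h1 : a = a') (h2 : b = b') (h3 : c = c')
    (h4 : d = d') : !![a, b; c, d] = !![a', b'; c', d'] := by
  subst h1 h2 h3 h4; rfl

lemma exists_conj [CharZero F] (l iu : Fˣ) (hi : (iu:F) * iu = -1) :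
    ∃ p : Matrix.SpecialLinearGroup (Fin 2) F,
      p * (torusSL F l * sigmaSL F) * p⁻¹ = torusSL F iu := by
  set i : F := (iu : F) with hidef
  have hl : (l:F) ≠ 0 := l.ne_zero
  have h2 : (2:F) ≠ 0 := two_ne_zero
  have h0 : i ≠ 0 := iu.ne_zero
  have hdet : (!![1, -(i*(l:F)); -(i * ((2:F)*(l:F))⁻¹), (2:F)⁻¹]).det = 1 := by
    simp [Matrix.det_fin_two_of]
    field_simp
    linear_combination -hi
  have hinv : ((iu⁻¹ : Fˣ) : F) = -i := by
    have h1 : i * ((iu⁻¹ : Fˣ) : F) = 1 := Units.mul_inv iu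
    have h3 : i * (-i) = 1 := by linear_combination -hi
    exact mul_left_cancel₀ h0 (h1.trans h3.symm)
  set P : Matrix.SpecialLinearGroup (Fin 2) F := ⟨_, hdet⟩ with hP
  refine ⟨P, ?_⟩
  have key : P * (torusSL F l * sigmaSL F) = torusSL F iu * P := by
    apply Subtype.ext
    show !![1, -(i*(l:F)); -(i * ((2:F)*(l:F))⁻¹), (2:F)⁻¹] *
        (!![(l:F), 0; 0, ((l⁻¹:Fˣ):F)] * !![0, 1; -1, 0]) =
      !![(iu:F), 0; 0, ((iu⁻¹:Fˣ):F)] * !![1, -(i*(l:F)); -(i * ((2:F)*(l:F))⁻¹), (2:F)⁻¹]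
    rw [hinv]
    rw [Matrix.mul_fin_two, Matrix.mul_fin_two, Matrix.mul_fin_two]
    refine fin2_ext ?_ ?_ ?_ ?_ <;> (try simp only [Units.val_inv_eq_inv_val]) <;> field_simp <;> ring_nf
    all_goals try simp only [← hidef]
    all_goals first
      | linear_combination hi
      | linear_combination -hi
      | linear_combination (l:F) * hi
      | linear_combination (2*(l:F)) * hi
  rw [key, mul_inv_cancel_right]

lemma conj_classify {l iu : Fˣ} {p x : Matrix.SpecialLinearGroup (Fin 2) F}
    (hp : p * (torusSL F l * sigmaSL F) * p⁻¹ = torusSL F iu)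
    (hx : x = torusSL F l * sigmaSL F ∨ x = -(torusSL F l * sigmaSL F) ∨ x = 1 ∨ x = -1) :
    p * x * p⁻¹ = torusSL F iu ∨ p * x * p⁻¹ = torusSL F (-iu) ∨
      p * x * p⁻¹ = torusSL F 1 ∨ p * x * p⁻¹ = torusSL F (-1) := by
  rcases hx with rfl | rfl | rfl | rfl
  · exact Or.inl hp
  · right; left; rw [torus_neg, mul_neg, neg_mul, hp]
  · right; right; left; rw [torus_one, mul_one, mul_inv_cancel]
  · right; right; right
    rw [torus_neg, torus_one, mul_neg, neg_mul, mul_one, mul_inv_cancel]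

end Helpers

/-- If an abelian subgroup A of N² = (T ∪ Tσ)² contains an element (t₁σ, t₂σ), then every
element of A lies in {(±t₁σ,±t₂σ), (±1,±t₂σ), (±t₁σ,±1), (±1,±1)}; consequently A is
conjugate (componentwise, inside SL₂(F)²) to a proper subgroup of the torus T². -/
theorem abelian_subgroup_meeting_sigma_sigma {F : Type*} [Field F] [IsAlgClosed F] [CharZero F]
    (t₁ t₂ : Matrix.SpecialLinearGroup (Fin 2) F)
    (ht₁ : t₁ ∈ torusSet F) (ht₂ : t₂ ∈ torusSet F)
    (A : Subgroup (Matrix.SpecialLinearGroup (Fin 2) F × Matrix.SpecialLinearGroup (Fin 2) F))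
    (habelian : ∀ a ∈ A, ∀ b ∈ A, a * b = b * a)
    (hsub : (A : Set (Matrix.SpecialLinearGroup (Fin 2) F ×
        Matrix.SpecialLinearGroup (Fin 2) F)) ⊆ (normSet F) ×ˢ (normSet F))
    (hmem : (t₁ * sigmaSL F, t₂ * sigmaSL F) ∈ A) :
    (∀ a ∈ A, a.1 ∈ ({t₁ * sigmaSL F, -(t₁ * sigmaSL F), 1, -1} :
        Set (Matrix.SpecialLinearGroup (Fin 2) F)) ∧
      a.2 ∈ ({t₂ * sigmaSL F, -(t₂ * sigmaSL F), 1, -1} :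
        Set (Matrix.SpecialLinearGroup (Fin 2) F))) ∧
    ∃ p q : Matrix.SpecialLinearGroup (Fin 2) F,
      (∀ a ∈ A, p * a.1 * p⁻¹ ∈ torusSet F ∧ q * a.2 * q⁻¹ ∈ torusSet F) ∧
      ∃ w : Matrix.SpecialLinearGroup (Fin 2) F × Matrix.SpecialLinearGroup (Fin 2) F,
        w.1 ∈ torusSet F ∧ w.2 ∈ torusSet F ∧
        w ∉ (fun a : Matrix.SpecialLinearGroup (Fin 2) F ×
            Matrix.SpecialLinearGroup (Fin 2) F =>
          (p * a.1 * p⁻¹, q * a.2 * q⁻¹)) '' (A : Set _) := by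
  obtain ⟨l₁, rfl⟩ := ht₁
  obtain ⟨l₂, rfl⟩ := ht₂
  obtain ⟨z, hz⟩ := IsAlgClosed.exists_pow_nat_eq (-1 : F) (n := 2) (by norm_num)
  have hz0 : z ≠ 0 := by intro h; rw [h] at hz; simp at hz
  set iu : Fˣ := Units.mk0 z hz0 with hiu
  have hi : (iu:F) * iu = -1 := by rw [hiu]; simpa [sq] using hz
  -- part 1: classification of elements of A
  have part1 : ∀ a ∈ A,
      (a.1 = torusSL F l₁ * sigmaSL F ∨ a.1 = -(torusSL F l₁ * sigmaSL F) ∨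
        a.1 = 1 ∨ a.1 = -1) ∧
      (a.2 = torusSL F l₂ * sigmaSL F ∨ a.2 = -(torusSL F l₂ * sigmaSL F) ∨
        a.2 = 1 ∨ a.2 = -1) := by
    intro a ha
    have hcomm := habelian a ha _ hmem
    have hc1 : a.1 * (torusSL F l₁ * sigmaSL F) = (torusSL F l₁ * sigmaSL F) * a.1 := by
      simpa using congrArg Prod.fst hcomm
    have hc2 : a.2 * (torusSL F l₂ * sigmaSL F) = (torusSL F l₂ * sigmaSL F) * a.2 := by
      simpa using congrArg Prod.snd hcomm
    have hn := hsub ha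
    rw [Set.mem_prod] at hn
    exact ⟨comm_in_norm hn.1 hc1, comm_in_norm hn.2 hc2⟩
  constructor
  · intro a ha
    obtain ⟨h1, h2⟩ := part1 a ha
    constructor
    · simp only [Set.mem_insert_iff, Set.mem_singleton_iff]; exact h1
    · simp only [Set.mem_insert_iff, Set.mem_singleton_iff]; exact h2
  · obtain ⟨p, hp⟩ := exists_conj l₁ iu hi
    obtain ⟨q, hq⟩ := exists_conj l₂ iu hi
    refine ⟨p, q, ?_, ?_⟩
    · intro a ha
      obtain ⟨h1, h2⟩ := part1 a ha
      constructor
      · rcases conj_classify hp h1 with h | h | h | h <;> exact ⟨_, h⟩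
      · rcases conj_classify hq h2 with h | h | h | h <;> exact ⟨_, h⟩
    · have h20 : (2:F) ≠ 0 := two_ne_zero
      refine ⟨(torusSL F (Units.mk0 (2:F) h20), torusSL F 1), ⟨_, rfl⟩, ⟨_, rfl⟩, ?_⟩
      rintro ⟨a, ha, heq⟩
      obtain ⟨h1, -⟩ := part1 a ha
      have hfst : p * a.1 * p⁻¹ = torusSL F (Units.mk0 (2:F) h20) := by
        simpa using congrArg Prod.fst heq
      have hbad : (2:F) = (iu:F) ∨ (2:F) = ((-iu:Fˣ):F) ∨ (2:F) = ((1:Fˣ):F) ∨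
          (2:F) = ((-1:Fˣ):F) := by
        rcases conj_classify hp h1 with h | h | h | h <;>
          [left; (right; left); (right; right; left); (right; right; right)] <;>
          · have := torus_inj (hfst.symm.trans h)
            exact congrArg Units.val this
      rcases hbad with h | h | h | h
      · have : (2:F) * 2 = -1 := by rw [h]; exact hi
        norm_num at this
      · have h' : (2:F) = -(iu:F) := by simpa using h
        have : (2:F) * 2 = -1 := by rw [h']; simpa using hi
        norm_num at this
      · simp at h
      · have h' : (2:F) = -1 := by simpa using h
        norm_num at h'
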